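/- Let n ≥ 1, and let γ : [0, L₁] → ℝⁿ and η : [0, L₂] → ℝⁿ (L₁, L₂ > 0) be unit-speed C² curves with γ(0) = η(0) and γ'(0) = η'(0), satisfying: (Assumption 2) for all s, s' ∈ [0, L₁] and t, t' ∈ [0, L₂], if s + t ≤ s' + t' then ‖γ'(s) − η'(t)‖ ≤ ‖γ'(s') − η'(t')‖; and (Assumption 3) there exist ε₀ > 0 and a ∈ (0, 2) such that for all s ∈ (0, min(ε₀, L₁)], ‖γ'(s) − γ'(0)‖ ≥ s^a, and for all t ∈ (0, min(ε₀, L₂)], ‖η'(t) − η'(0)‖ ≥ t^a. Then for all k₁, k₂ > 0 and all ε > 0 there exists δ > 0 such that for all σ_x ∈ (0, δ) and all σ_t ∈ [k₁σ_x, k₂σ_x], ⟨μ_γ, μ_η⟩ ≤ ε · (‖μ_γ‖² + ‖μ_η‖²). -/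

import Mathlib

open Set MeasureTheory

/-- The Gaussian oriented-varifold inner product of two curves `γ : [0, L₁] → ℝⁿ` and
`η : [0, L₂] → ℝⁿ`, given together with their (unit) tangent fields `tγ`, `tη` and
kernel widths `σx`, `σt`. -/
noncomputable def vfInner {n : ℕ} (σx σt L₁ L₂ : ℝ)
    (γ tγ η tη : ℝ → EuclideanSpace ℝ (Fin n)) : ℝ :=
  ∫ s in (0:ℝ)..L₁, ∫ t in (0:ℝ)..L₂,
    Real.exp (-‖γ s - η t‖ ^ 2 / σx ^ 2) * Real.exp (-‖tγ s - tη t‖ ^ 2 / σt ^ 2)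


lemma dodge_le {L : ℝ} (hL : 0 ≤ L) {f g : ℝ → ℝ}
    (hg : IntegrableOn g (Ioc 0 L)) (hg0 : ∀ x ∈ Ioc (0:ℝ) L, 0 ≤ g x)
    (hfg : ∀ x ∈ Ioc (0:ℝ) L, f x ≤ g x) :
    (∫ x in (0:ℝ)..L, f x) ≤ ∫ x in Ioc (0:ℝ) L, g x := by
  rw [intervalIntegral.integral_of_le hL]
  by_cases hf : IntegrableOn f (Ioc 0 L)
  · exact setIntegral_mono_on hf hg measurableSet_Ioc hfg
  · rw [integral_undef hf]
    exact setIntegral_nonneg measurableSet_Ioc hg0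

lemma double_bound {L₁ L₂ r E : ℝ} (hL₁ : 0 < L₁) (hL₂ : 0 < L₂) (hr : 0 < r) (hE : 0 ≤ E)
    (f : ℝ → ℝ → ℝ) (hf0 : ∀ s t, 0 ≤ f s t) (hf1 : ∀ s t, f s t ≤ 1)
    (hfE : ∀ s ∈ Ioc (0:ℝ) L₁, ∀ t ∈ Ioc (0:ℝ) L₂, r ≤ s + t → f s t ≤ E) :
    (∫ s in (0:ℝ)..L₁, ∫ t in (0:ℝ)..L₂, f s t) ≤ E * L₁ * L₂ + r * r := by
  set G : ℝ → ℝ := fun s => E * L₂ + Set.indicator (Iio r) (fun _ => r) s with hG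
  have hGint : IntegrableOn G (Ioc 0 L₁) := by
    apply Integrable.add
    · exact (integrableOn_const_iff).2 (Or.inr (by simp [Real.volume_Ioc]))
    · apply Integrable.indicator _ measurableSet_Iio
      exact (integrableOn_const_iff).2 (Or.inr (by simp [Real.volume_Ioc]))
  have hG0 : ∀ s ∈ Ioc (0:ℝ) L₁, 0 ≤ G s := by
    intro s _
    have : 0 ≤ Set.indicator (Iio r) (fun _ => r) s :=
      Set.indicator_nonneg (fun _ _ => hr.le) s
    have h2 : 0 ≤ E * L₂ := mul_nonneg hE hL₂.le
    simpa [hG] using add_nonneg h2 this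
  have hinner : ∀ s ∈ Ioc (0:ℝ) L₁, (∫ t in (0:ℝ)..L₂, f s t) ≤ G s := by
    intro s hs
    by_cases hsr : r ≤ s
    · -- for all t ∈ Ioc 0 L₂, f s t ≤ E
      have key : ∀ t ∈ Ioc (0:ℝ) L₂, f s t ≤ E := fun t ht =>
        hfE s hs t ht (le_trans hsr (le_add_of_nonneg_right ht.1.le))
      have : (∫ t in (0:ℝ)..L₂, f s t) ≤ ∫ t in Ioc (0:ℝ) L₂, (fun _ => E) t := by
        apply dodge_le hL₂.le ((integrableOn_const_iff).2 (Or.inr (by simp [Real.volume_Ioc])))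
          (fun _ _ => hE) key
      rw [setIntegral_const, measureReal_def] at this
      have hvol : ((volume (Ioc (0:ℝ) L₂)).toReal) = L₂ := by
        simp [Real.volume_Ioc, hL₂.le]
      rw [hvol] at this
      have hind : Set.indicator (Iio r) (fun _ => r) s = 0 := by
        apply Set.indicator_of_notMem
        simpa using hsr
      rw [hG]; simp only [hind, add_zero]
      rw [smul_eq_mul] at this
      linarith [this]
    · push_neg at hsr
      set g : ℝ → ℝ := fun t => E + Set.indicator (Iio r) (fun _ => (1:ℝ)) t with hgdef
      have hgint : IntegrableOn g (Ioc 0 L₂) := by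
        apply Integrable.add
        · exact (integrableOn_const_iff).2 (Or.inr (by simp [Real.volume_Ioc]))
        · exact Integrable.indicator ((integrableOn_const_iff).2 (Or.inr (by simp [Real.volume_Ioc]))) measurableSet_Iio
      have hg0 : ∀ t ∈ Ioc (0:ℝ) L₂, 0 ≤ g t := fun t _ =>
        add_nonneg hE (Set.indicator_nonneg (fun _ _ => zero_le_one) t)
      have hfg : ∀ t ∈ Ioc (0:ℝ) L₂, f s t ≤ g t := by
        intro t ht
        by_cases htr : t < r
        · have : Set.indicator (Iio r) (fun _ => (1:ℝ)) t = 1 := Set.indicator_of_mem (Set.mem_Iio.2 htr) _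
          rw [hgdef]; simp only [this]
          linarith [hf1 s t]
        · push_neg at htr
          have : Set.indicator (Iio r) (fun _ => (1:ℝ)) t = 0 := by
            apply Set.indicator_of_notMem; simpa using htr
          rw [hgdef]; simp only [this, add_zero]
          exact hfE s hs t ht (le_trans htr (le_add_of_nonneg_left hs.1.le))
      have step := dodge_le hL₂.le hgint hg0 hfg
      have : (∫ t in Ioc (0:ℝ) L₂, g t) ≤ E * L₂ + r := by
        rw [hgdef]
        rw [integral_add ((integrableOn_const_iff (C := E) (s := Ioc (0:ℝ) L₂) (μ := volume)).2 (Or.inr (by simp [Real.volume_Ioc])))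
          (Integrable.indicator ((integrableOn_const_iff (C := (1:ℝ)) (s := Ioc (0:ℝ) L₂) (μ := volume)).2 (Or.inr (by simp [Real.volume_Ioc]))) measurableSet_Iio)]
        rw [setIntegral_const, setIntegral_indicator measurableSet_Iio, setIntegral_const, measureReal_def, measureReal_def]
        have hvol : ((volume (Ioc (0:ℝ) L₂)).toReal) = L₂ := by simp [Real.volume_Ioc, hL₂.le]
        have hsub : Ioc (0:ℝ) L₂ ∩ Iio r ⊆ Ioo 0 r := fun x hx => ⟨hx.1.1, hx.2⟩
        have hvol2 : ((volume (Ioc (0:ℝ) L₂ ∩ Iio r)).toReal) ≤ r := by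
          have h1 : volume (Ioc (0:ℝ) L₂ ∩ Iio r) ≤ volume (Ioo (0:ℝ) r) := measure_mono hsub
          have h2 : volume (Ioo (0:ℝ) r) = ENNReal.ofReal r := by simp [Real.volume_Ioo]
          calc ((volume (Ioc (0:ℝ) L₂ ∩ Iio r)).toReal) ≤ (ENNReal.ofReal r).toReal := by
                apply ENNReal.toReal_mono (by simp) (h2 ▸ h1)
            _ = r := ENNReal.toReal_ofReal hr.le
        rw [hvol]
        simp only [smul_eq_mul, mul_one]
        linarith
      have hind : Set.indicator (Iio r) (fun _ => r) s = r := Set.indicator_of_mem (Set.mem_Iio.2 hsr) _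
      rw [hG]; simp only [hind]
      linarith
  -- outer
  have houter := dodge_le hL₁.le hGint hG0 hinner
  have : (∫ s in Ioc (0:ℝ) L₁, G s) ≤ E * L₂ * L₁ + r * r := by
    rw [hG]
    rw [integral_add ((integrableOn_const_iff (C := E * L₂) (s := Ioc (0:ℝ) L₁) (μ := volume)).2 (Or.inr (by simp [Real.volume_Ioc])))
      (Integrable.indicator ((integrableOn_const_iff (C := r) (s := Ioc (0:ℝ) L₁) (μ := volume)).2 (Or.inr (by simp [Real.volume_Ioc]))) measurableSet_Iio)]
    rw [setIntegral_const, setIntegral_indicator measurableSet_Iio, setIntegral_const, measureReal_def, measureReal_def]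
    have hvol : ((volume (Ioc (0:ℝ) L₁)).toReal) = L₁ := by simp [Real.volume_Ioc, hL₁.le]
    have hsub : Ioc (0:ℝ) L₁ ∩ Iio r ⊆ Ioo 0 r := fun x hx => ⟨hx.1.1, hx.2⟩
    have hvol2 : ((volume (Ioc (0:ℝ) L₁ ∩ Iio r)).toReal) ≤ r := by
      have h1 : volume (Ioc (0:ℝ) L₁ ∩ Iio r) ≤ volume (Ioo (0:ℝ) r) := measure_mono hsub
      have h2 : volume (Ioo (0:ℝ) r) = ENNReal.ofReal r := by simp [Real.volume_Ioo]
      calc ((volume (Ioc (0:ℝ) L₁ ∩ Iio r)).toReal) ≤ (ENNReal.ofReal r).toReal := by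
            apply ENNReal.toReal_mono (by simp) (h2 ▸ h1)
        _ = r := ENNReal.toReal_ofReal hr.le
    rw [hvol]
    simp only [smul_eq_mul, mul_one]
    nlinarith [hvol2, hr.le]
  calc (∫ s in (0:ℝ)..L₁, ∫ t in (0:ℝ)..L₂, f s t) ≤ ∫ s in Ioc (0:ℝ) L₁, G s := houter
    _ ≤ E * L₂ * L₁ + r * r := this
    _ = E * L₁ * L₂ + r * r := by ring_nf

lemma double_lower {L r c₀ : ℝ} (hL : 0 < L) (hr : 0 < r) (hrL : r ≤ L / 2) (hc : 0 ≤ c₀)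
    (f : ℝ → ℝ → ℝ) (hf0 : ∀ s t, 0 ≤ f s t)
    (hfc : ∀ s ∈ Ioc (0:ℝ) (L/2), ∀ t ∈ Icc s (s+r), c₀ ≤ f s t)
    (hint : ∀ s ∈ Ioc (0:ℝ) L, IntegrableOn (f s) (Ioc 0 L))
    (hF : IntegrableOn (fun s => ∫ t in (0:ℝ)..L, f s t) (Ioc 0 L)) :
    c₀ * r * (L / 2) ≤ ∫ s in (0:ℝ)..L, ∫ t in (0:ℝ)..L, f s t := by
  set F : ℝ → ℝ := fun s => ∫ t in (0:ℝ)..L, f s t with hFdef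
  set G : ℝ → ℝ := Set.indicator (Ioc 0 (L/2)) (fun _ => c₀ * r) with hGdef
  have hGint : IntegrableOn G (Ioc 0 L) :=
    Integrable.indicator ((integrableOn_const_iff).2 (Or.inr (by simp [Real.volume_Ioc]))) measurableSet_Ioc
  have hGF : ∀ s ∈ Ioc (0:ℝ) L, G s ≤ F s := by
    intro s hs
    by_cases hsh : s ∈ Ioc (0:ℝ) (L/2)
    · have hind : G s = c₀ * r := Set.indicator_of_mem hsh _
      rw [hind, hFdef]
      simp only []
      rw [intervalIntegral.integral_of_le hL.le]
      set g : ℝ → ℝ := Set.indicator (Ioc s (s+r)) (fun _ => c₀) with hgdef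
      have hgint : IntegrableOn g (Ioc 0 L) :=
        Integrable.indicator ((integrableOn_const_iff).2 (Or.inr (by simp [Real.volume_Ioc]))) measurableSet_Ioc
      have hgf : ∀ t ∈ Ioc (0:ℝ) L, g t ≤ f s t := by
        intro t _
        by_cases htm : t ∈ Ioc s (s+r)
        · rw [hgdef, Set.indicator_of_mem htm]
          exact hfc s hsh t ⟨htm.1.le, htm.2⟩
        · rw [hgdef, Set.indicator_of_notMem htm]
          exact hf0 s t
      have := setIntegral_mono_on hgint (hint s hs) measurableSet_Ioc hgf
      have hgval : (∫ t in Ioc (0:ℝ) L, g t) = c₀ * r := by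
        rw [hgdef, setIntegral_indicator measurableSet_Ioc, setIntegral_const, measureReal_def]
        have hsub : Ioc (0:ℝ) L ∩ Ioc s (s+r) = Ioc s (s+r) := by
          apply Set.inter_eq_self_of_subset_right
          intro x hx
          exact ⟨lt_trans hsh.1 hx.1, le_trans hx.2 (by linarith [hsh.2])⟩
        rw [hsub]
        simp [Real.volume_Ioc, hr.le, smul_eq_mul, mul_comm]
      linarith [hgval ▸ this]
    · have hind : G s = 0 := Set.indicator_of_notMem hsh _
      rw [hind, hFdef]
      exact intervalIntegral.integral_nonneg hL.le (fun t _ => hf0 s t)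
  have hmono := setIntegral_mono_on hGint hF measurableSet_Ioc hGF
  have hGval : (∫ s in Ioc (0:ℝ) L, G s) = c₀ * r * (L/2) := by
    rw [hGdef, setIntegral_indicator measurableSet_Ioc, setIntegral_const, measureReal_def]
    have hsub : Ioc (0:ℝ) L ∩ Ioc 0 (L/2) = Ioc 0 (L/2) := by
      apply Set.inter_eq_self_of_subset_right
      intro x hx
      exact ⟨hx.1, le_trans hx.2 (by linarith)⟩
    rw [hsub]
    have : (volume (Ioc (0:ℝ) (L/2))).toReal = L/2 := by simp [Real.volume_Ioc]; linarith
    rw [this, smul_eq_mul]; ring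
  rw [intervalIntegral.integral_of_le hL.le]
  calc c₀ * r * (L/2) = ∫ s in Ioc (0:ℝ) L, G s := hGval.symm
    _ ≤ ∫ s in Ioc (0:ℝ) L, F s := hmono

lemma kernel_contOn {n : ℕ} (σx σt L : ℝ) (γ tγ : ℝ → EuclideanSpace ℝ (Fin n))
    (hγ : ContinuousOn γ (Icc 0 L)) (htγ : ContinuousOn tγ (Icc 0 L)) :
    ContinuousOn (fun p : ℝ × ℝ =>
      Real.exp (-‖γ p.1 - γ p.2‖ ^ 2 / σx ^ 2) * Real.exp (-‖tγ p.1 - tγ p.2‖ ^ 2 / σt ^ 2))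
      (Icc 0 L ×ˢ Icc 0 L) := by
  have h1 : ContinuousOn (fun p : ℝ × ℝ => γ p.1) (Icc 0 L ×ˢ Icc 0 L) :=
    hγ.comp continuous_fst.continuousOn (fun p hp => hp.1)
  have h2 : ContinuousOn (fun p : ℝ × ℝ => γ p.2) (Icc 0 L ×ˢ Icc 0 L) :=
    hγ.comp continuous_snd.continuousOn (fun p hp => hp.2)
  have h3 : ContinuousOn (fun p : ℝ × ℝ => tγ p.1) (Icc 0 L ×ˢ Icc 0 L) :=
    htγ.comp continuous_fst.continuousOn (fun p hp => hp.1)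
  have h4 : ContinuousOn (fun p : ℝ × ℝ => tγ p.2) (Icc 0 L ×ˢ Icc 0 L) :=
    htγ.comp continuous_snd.continuousOn (fun p hp => hp.2)
  apply ContinuousOn.mul
  · exact Real.continuous_exp.comp_continuousOn
      ((((h1.sub h2).norm.pow 2).neg).div_const _)
  · exact Real.continuous_exp.comp_continuousOn
      ((((h3.sub h4).norm.pow 2).neg).div_const _)

lemma self_F_integrable {n : ℕ} (σx σt L : ℝ) (hL : 0 < L)
    (γ tγ : ℝ → EuclideanSpace ℝ (Fin n))
    (hγ : ContinuousOn γ (Icc 0 L)) (htγ : ContinuousOn tγ (Icc 0 L)) :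
    IntegrableOn (fun s => ∫ t in (0:ℝ)..L,
      Real.exp (-‖γ s - γ t‖ ^ 2 / σx ^ 2) * Real.exp (-‖tγ s - tγ t‖ ^ 2 / σt ^ 2))
      (Ioc 0 L) := by
  set k : ℝ × ℝ → ℝ := fun p =>
    Real.exp (-‖γ p.1 - γ p.2‖ ^ 2 / σx ^ 2) * Real.exp (-‖tγ p.1 - tγ p.2‖ ^ 2 / σt ^ 2)
    with hk
  have hkc : ContinuousOn k (Ioc 0 L ×ˢ Ioc 0 L) :=
    (kernel_contOn σx σt L γ tγ hγ htγ).mono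
      (Set.prod_mono Ioc_subset_Icc_self Ioc_subset_Icc_self)
  have hmeas : AEStronglyMeasurable k
      ((volume.restrict (Ioc (0:ℝ) L)).prod (volume.restrict (Ioc (0:ℝ) L))) := by
    rw [Measure.prod_restrict]
    exact hkc.aestronglyMeasurable (measurableSet_Ioc.prod measurableSet_Ioc)
  have hFmeas : AEStronglyMeasurable
      (fun s => ∫ t, k (s, t) ∂(volume.restrict (Ioc (0:ℝ) L)))
      (volume.restrict (Ioc (0:ℝ) L)) :=
    hmeas.integral_prod_right'
  have heq : (fun s => ∫ t in (0:ℝ)..L,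
      Real.exp (-‖γ s - γ t‖ ^ 2 / σx ^ 2) * Real.exp (-‖tγ s - tγ t‖ ^ 2 / σt ^ 2))
      = fun s => ∫ t, k (s, t) ∂(volume.restrict (Ioc (0:ℝ) L)) := by
    funext s
    rw [intervalIntegral.integral_of_le hL.le]
  rw [heq]
  apply Integrable.mono' ((integrableOn_const_iff (C := L)).2 (Or.inr (by simp [Real.volume_Ioc])))
    hFmeas
  apply Filter.Eventually.of_forall
  intro s
  have hb : ∀ t ∈ Set.uIoc (0:ℝ) L, ‖k (s, t)‖ ≤ 1 := by
    intro t _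
    rw [Real.norm_eq_abs, abs_of_nonneg (le_of_lt (mul_pos (Real.exp_pos _) (Real.exp_pos _)))]
    have e1 : Real.exp (-‖γ s - γ t‖ ^ 2 / σx ^ 2) ≤ 1 := by
      apply Real.exp_le_one_iff.2
      apply div_nonpos_of_nonpos_of_nonneg (neg_nonpos.2 (sq_nonneg _)) (sq_nonneg _)
    have e2 : Real.exp (-‖tγ s - tγ t‖ ^ 2 / σt ^ 2) ≤ 1 := by
      apply Real.exp_le_one_iff.2
      apply div_nonpos_of_nonpos_of_nonneg (neg_nonpos.2 (sq_nonneg _)) (sq_nonneg _)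
    calc Real.exp (-‖γ s - γ t‖ ^ 2 / σx ^ 2) * Real.exp (-‖tγ s - tγ t‖ ^ 2 / σt ^ 2)
        ≤ 1 * 1 := mul_le_mul e1 e2 (Real.exp_pos _).le zero_le_one
      _ = 1 := one_mul 1
  have := intervalIntegral.norm_integral_le_of_norm_le_const (a := 0) (b := L)
    (f := fun t => k (s, t)) (C := 1) hb
  rw [intervalIntegral.integral_of_le hL.le] at this
  calc ‖∫ t, k (s, t) ∂(volume.restrict (Ioc (0:ℝ) L))‖
      ≤ 1 * |L - 0| := this
    _ = L := by rw [one_mul, sub_zero, abs_of_pos hL]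

lemma tangent_facts {n : ℕ} {L : ℝ} (hL : 0 < L) (γ tγ : ℝ → EuclideanSpace ℝ (Fin n))
    (hderiv : ∀ s ∈ Icc (0:ℝ) L, HasDerivWithinAt γ (tγ s) (Icc 0 L) s)
    (hC2 : ContDiffOn ℝ 2 γ (Icc 0 L)) :
    ContinuousOn tγ (Icc 0 L) ∧
    ∃ M : ℝ, 0 ≤ M ∧ ∀ s ∈ Icc (0:ℝ) L, ∀ t ∈ Icc (0:ℝ) L, ‖tγ s - tγ t‖ ≤ M * |s - t| := by
  have hu : UniqueDiffOn ℝ (Icc (0:ℝ) L) := uniqueDiffOn_Icc hL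
  have heq : ∀ s ∈ Icc (0:ℝ) L, derivWithin γ (Icc 0 L) s = tγ s := fun s hs =>
    (hderiv s hs).derivWithin (hu s hs)
  have hd1 : ContDiffOn ℝ 1 (derivWithin γ (Icc 0 L)) (Icc 0 L) :=
    hC2.derivWithin hu (by norm_num)
  have hcont : ContinuousOn tγ (Icc 0 L) :=
    (hd1.continuousOn).congr (fun s hs => (heq s hs).symm)
  refine ⟨hcont, ?_⟩
  -- second derivative bound
  set g := derivWithin (derivWithin γ (Icc 0 L)) (Icc 0 L) with hg
  have hgcont : ContinuousOn g (Icc 0 L) := hd1.continuousOn_derivWithin hu le_rfl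
  obtain ⟨C, hC⟩ := (isCompact_Icc).exists_bound_of_continuousOn hgcont
  have hC0 : 0 ≤ C := le_trans (norm_nonneg _) (hC 0 ⟨le_refl 0, hL.le⟩)
  refine ⟨C, hC0, ?_⟩
  intro s hs t ht
  have hder : ∀ x ∈ Icc (0:ℝ) L, HasDerivWithinAt tγ (g x) (Icc 0 L) x := by
    intro x hx
    have hdiff : DifferentiableWithinAt ℝ (derivWithin γ (Icc 0 L)) (Icc 0 L) x :=
      hd1.differentiableOn (by norm_num) x hx
    exact (hdiff.hasDerivWithinAt).congr (fun y hy => (heq y hy).symm) (heq x hx).symm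
  have := Convex.norm_image_sub_le_of_norm_hasDerivWithin_le hder hC (convex_Icc 0 L) ht hs
  calc ‖tγ s - tγ t‖ ≤ C * ‖s - t‖ := this
    _ = C * |s - t| := by rw [Real.norm_eq_abs]

lemma curve_lip {n : ℕ} {L : ℝ} (hL : 0 < L) (γ tγ : ℝ → EuclideanSpace ℝ (Fin n))
    (hderiv : ∀ s ∈ Icc (0:ℝ) L, HasDerivWithinAt γ (tγ s) (Icc 0 L) s)
    (hunit : ∀ s ∈ Icc (0:ℝ) L, ‖tγ s‖ = 1) :
    ∀ s ∈ Icc (0:ℝ) L, ∀ t ∈ Icc (0:ℝ) L, ‖γ s - γ t‖ ≤ |s - t| := by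
  intro s hs t ht
  have := Convex.norm_image_sub_le_of_norm_hasDerivWithin_le hderiv
    (fun x hx => le_of_eq (hunit x hx)) (convex_Icc 0 L) ht hs
  simpa [Real.norm_eq_abs] using this

lemma exp_neg_le_pow (m : ℕ) (hm : 1 ≤ m) {z : ℝ} (hz : 0 < z) :
    Real.exp (-z) ≤ ((m : ℝ) / z) ^ m := by
  have hm0 : (0:ℝ) < m := by exact_mod_cast hm
  have h1 : z / m ≤ Real.exp (z / m) := by
    linarith [Real.add_one_le_exp (z / m)]
  have h2 : (z / m) ^ m ≤ Real.exp (z / m) ^ m :=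
    pow_le_pow_left₀ (by positivity) h1 m
  have h3 : Real.exp (z / m) ^ m = Real.exp z := by
    rw [← Real.exp_nat_mul]
    congr 1
    field_simp
  have h4 : (z / m) ^ m ≤ Real.exp z := h3 ▸ h2
  have h5 : (0:ℝ) < (z / m) ^ m := by positivity
  rw [Real.exp_neg]
  rw [div_pow]
  rw [div_pow] at h4 h5
  have hzm : (0:ℝ) < z ^ m := by positivity
  have hmm : (0:ℝ) < (m:ℝ) ^ m := by positivity
  calc (Real.exp z)⁻¹ ≤ (z ^ m / (m:ℝ) ^ m)⁻¹ := inv_anti₀ h5 h4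
    _ = (m:ℝ) ^ m / z ^ m := by rw [inv_div]

lemma ev_rpow_lt {e c : ℝ} (he : 0 < e) (hc : 0 < c) :
    ∀ᶠ x in nhdsWithin 0 (Ioi 0), x ^ e < c := by
  have h := (Real.continuousAt_rpow_const 0 e (Or.inr he.le)).tendsto
  rw [Real.zero_rpow he.ne'] at h
  exact (h.mono_left nhdsWithin_le_nhds).eventually_lt_const hc

section Main

variable {n : ℕ}

-- continuity of the inner integrand for fixed first argument
lemma inner_cont (σx σt L : ℝ) (A B : EuclideanSpace ℝ (Fin n))
    (η tη : ℝ → EuclideanSpace ℝ (Fin n))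
    (hη : ContinuousOn η (Icc 0 L)) (htη : ContinuousOn tη (Icc 0 L)) :
    ContinuousOn (fun t => Real.exp (-‖A - η t‖ ^ 2 / σx ^ 2) *
      Real.exp (-‖B - tη t‖ ^ 2 / σt ^ 2)) (Icc 0 L) := by
  apply ContinuousOn.mul
  · exact Real.continuous_exp.comp_continuousOn
      ((((continuousOn_const.sub hη).norm.pow 2).neg).div_const _)
  · exact Real.continuous_exp.comp_continuousOn
      ((((continuousOn_const.sub htη).norm.pow 2).neg).div_const _)

set_option maxHeartbeats 1000000 in
theorem cross_term_negligible_branching_edges'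
    (hn : 1 ≤ n) (L₁ L₂ : ℝ) (hL₁ : 0 < L₁) (hL₂ : 0 < L₂)
    (γ tγ η tη : ℝ → EuclideanSpace ℝ (Fin n))
    (hγderiv : ∀ s ∈ Icc (0:ℝ) L₁, HasDerivWithinAt γ (tγ s) (Icc 0 L₁) s)
    (hηderiv : ∀ t ∈ Icc (0:ℝ) L₂, HasDerivWithinAt η (tη t) (Icc 0 L₂) t)
    (hγunit : ∀ s ∈ Icc (0:ℝ) L₁, ‖tγ s‖ = 1)
    (hηunit : ∀ t ∈ Icc (0:ℝ) L₂, ‖tη t‖ = 1)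
    (hγC2 : ContDiffOn ℝ 2 γ (Icc 0 L₁))
    (hηC2 : ContDiffOn ℝ 2 η (Icc 0 L₂))
    (hjoin : γ 0 = η 0)
    (htangent : tγ 0 = tη 0)
    (hA2 : ∀ s ∈ Icc (0:ℝ) L₁, ∀ s' ∈ Icc (0:ℝ) L₁, ∀ t ∈ Icc (0:ℝ) L₂, ∀ t' ∈ Icc (0:ℝ) L₂,
      s + t ≤ s' + t' → ‖tγ s - tη t‖ ≤ ‖tγ s' - tη t'‖)
    (hA3 : ∃ ε₀ : ℝ, 0 < ε₀ ∧ ∃ a : ℝ, a ∈ Ioo (0:ℝ) 2 ∧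
      (∀ s ∈ Ioc (0:ℝ) (min ε₀ L₁), s ^ a ≤ ‖tγ s - tγ 0‖) ∧
      (∀ t ∈ Ioc (0:ℝ) (min ε₀ L₂), t ^ a ≤ ‖tη t - tη 0‖)) :
    ∀ k₁ k₂ : ℝ, 0 < k₁ → 0 < k₂ → ∀ ε : ℝ, 0 < ε →
      ∃ δ > 0, ∀ σx : ℝ, 0 < σx → σx < δ → ∀ σt : ℝ, k₁ * σx ≤ σt → σt ≤ k₂ * σx →
        vfInner σx σt L₁ L₂ γ tγ η tη ≤
          ε * (vfInner σx σt L₁ L₁ γ tγ γ tγ + vfInner σx σt L₂ L₂ η tη η tη) := by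
  intro k₁ k₂ hk₁ hk₂ ε hε
  obtain ⟨ε₀, hε₀, a, ⟨ha0, ha2⟩, hA3γ, hA3η⟩ := hA3
  -- regularity facts
  have hγcont : ContinuousOn γ (Icc 0 L₁) := fun s hs => (hγderiv s hs).continuousWithinAt
  have hηcont : ContinuousOn η (Icc 0 L₂) := fun t ht => (hηderiv t ht).continuousWithinAt
  obtain ⟨htγcont, M, hM0, hMlip⟩ := tangent_facts hL₁ γ tγ hγderiv hγC2
  obtain ⟨htηcont, -⟩ := tangent_facts hL₂ η tη hηderiv hηC2
  have hγlip := curve_lip hL₁ γ tγ hγderiv hγunit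
  -- constants
  set c₀ : ℝ := Real.exp (-1) * Real.exp (-(M / k₁) ^ 2) with hc₀def
  have hc₀ : 0 < c₀ := mul_pos (Real.exp_pos _) (Real.exp_pos _)
  set p : ℝ := (a + 2) / (4 * a) with hpdef
  have hp : 0 < p := by apply div_pos <;> nlinarith
  have h2p1 : 0 < 2 * p - 1 := by
    have : 2 * p - 1 = (2 - a) / (2 * a) := by field_simp [hpdef]; linarith [show p * a * 4 = a + 2 from by rw [hpdef, mul_assoc, mul_comm a 4, div_mul_cancel₀ _ (by positivity : (4:ℝ) * a ≠ 0)]]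
    rw [this]; apply div_pos <;> nlinarith
  set q : ℝ := (2 - a) / 2 with hqdef
  have hq : 0 < q := by apply div_pos <;> linarith
  set m : ℕ := ⌈2 / q⌉₊ + 1 with hmdef
  have hm1 : 1 ≤ m := Nat.le_add_left 1 _
  have hmq : 2 ≤ q * m := by
    have h1 : 2 / q ≤ (⌈2 / q⌉₊ : ℝ) := Nat.le_ceil _
    have h2 : ((⌈2 / q⌉₊ : ℕ) : ℝ) ≤ (m : ℝ) := by exact_mod_cast Nat.le_succ _
    calc (2:ℝ) = q * (2 / q) := by field_simp
      _ ≤ q * m := by apply mul_le_mul_of_nonneg_left (le_trans h1 h2) hq.le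
  have hqm1 : 0 < q * m - 1 := by linarith
  set c₅ : ℝ := ε * c₀ * (L₁ / 2) / 2 with hc₅def
  have hc₅ : 0 < c₅ := by positivity
  have hmk : (0:ℝ) < ((m : ℝ) * k₂ ^ 2) ^ m := by
    have : (0:ℝ) < (m:ℝ) := by exact_mod_cast hm1
    positivity
  set c₄ : ℝ := c₅ / (L₁ * L₂ * ((m : ℝ) * k₂ ^ 2) ^ m) with hc₄def
  have hc₄ : 0 < c₄ := by positivity
  -- eventual conditions
  have hev : ∀ᶠ x in nhdsWithin 0 (Ioi 0), x ^ (1:ℝ) < L₁ / 2 ∧ x ^ p < min ε₀ L₁ ∧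
      x ^ (2 * p - 1) < c₅ ∧ x ^ (q * m - 1) < c₄ := by
    exact (ev_rpow_lt one_pos (by linarith)).and ((ev_rpow_lt hp (lt_min hε₀ hL₁)).and
      ((ev_rpow_lt h2p1 hc₅).and (ev_rpow_lt hqm1 hc₄)))
  obtain ⟨δ, hδ0, hδsub⟩ := mem_nhdsGT_iff_exists_Ioc_subset.1 hev
  refine ⟨δ, hδ0, ?_⟩
  intro x hx hxδ σt hσt1 hσt2
  obtain ⟨hC1, hC2, hC3, hC4⟩ := hδsub ⟨hx, hxδ.le⟩
  rw [Real.rpow_one] at hC1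
  have hσt : 0 < σt := lt_of_lt_of_le (by positivity) hσt1
  -- the three integrands
  set r : ℝ := x ^ p with hrdef
  have hr : 0 < r := Real.rpow_pos_of_pos hx p
  set E : ℝ := Real.exp (-(r ^ a) ^ 2 / σt ^ 2) with hEdef
  have hE0 : 0 ≤ E := (Real.exp_pos _).le
  -- generic bounds on the exponential factors
  have hexp_le_one : ∀ (A : EuclideanSpace ℝ (Fin n)) (σ : ℝ),
      Real.exp (-‖A‖ ^ 2 / σ ^ 2) ≤ 1 := by
    intro A σ
    apply Real.exp_le_one_iff.2
    exact div_nonpos_of_nonpos_of_nonneg (neg_nonpos.2 (sq_nonneg _)) (sq_nonneg _)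
  have hf0 : ∀ (A B : EuclideanSpace ℝ (Fin n)) (σ τ : ℝ),
      0 ≤ Real.exp (-‖A‖ ^ 2 / σ ^ 2) * Real.exp (-‖B‖ ^ 2 / τ ^ 2) :=
    fun _ _ _ _ => mul_nonneg (Real.exp_pos _).le (Real.exp_pos _).le
  have hf1 : ∀ (A B : EuclideanSpace ℝ (Fin n)) (σ τ : ℝ),
      Real.exp (-‖A‖ ^ 2 / σ ^ 2) * Real.exp (-‖B‖ ^ 2 / τ ^ 2) ≤ 1 := by
    intro A B σ τ
    calc Real.exp (-‖A‖ ^ 2 / σ ^ 2) * Real.exp (-‖B‖ ^ 2 / τ ^ 2)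
        ≤ 1 * 1 := mul_le_mul (hexp_le_one A σ) (hexp_le_one B τ) (Real.exp_pos _).le zero_le_one
      _ = 1 := one_mul 1
  -- STEP 1 : cross-term upper bound
  have cross_bound : vfInner x σt L₁ L₂ γ tγ η tη ≤ E * L₁ * L₂ + r * r := by
    rw [vfInner]
    apply double_bound hL₁ hL₂ hr hE0 _ (fun s t => hf0 _ _ _ _) (fun s t => hf1 _ _ _ _)
    intro s hs t ht hrst
    set u : ℝ := min (s + t) (min ε₀ L₁) with hudef
    have hu0 : 0 < u := lt_min (by linarith [hs.1, ht.1]) (lt_min hε₀ hL₁)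
    have huL : u ≤ L₁ := le_trans (min_le_right _ _) (min_le_right _ _)
    have huIcc : u ∈ Icc (0:ℝ) L₁ := ⟨hu0.le, huL⟩
    have hsIcc : s ∈ Icc (0:ℝ) L₁ := ⟨hs.1.le, hs.2⟩
    have htIcc : t ∈ Icc (0:ℝ) L₂ := ⟨ht.1.le, ht.2⟩
    have h0Icc : (0:ℝ) ∈ Icc (0:ℝ) L₂ := ⟨le_refl 0, hL₂.le⟩
    have hmono := hA2 u huIcc s hsIcc 0 h0Icc t htIcc (by linarith [min_le_left (s+t) (min ε₀ L₁)])
    rw [← htangent] at hmono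
    have hA3u : u ^ a ≤ ‖tγ u - tγ 0‖ := hA3γ u ⟨hu0, min_le_right _ _⟩
    have hru : r ≤ u := le_min hrst hC2.le
    have hra : r ^ a ≤ u ^ a := Real.rpow_le_rpow hr.le hru ha0.le
    have hkey : r ^ a ≤ ‖tγ s - tη t‖ := le_trans hra (le_trans hA3u hmono)
    have hsq : (r ^ a) ^ 2 ≤ ‖tγ s - tη t‖ ^ 2 :=
      pow_le_pow_left₀ (Real.rpow_pos_of_pos hr a).le hkey 2
    have hdiv : (r ^ a) ^ 2 / σt ^ 2 ≤ ‖tγ s - tη t‖ ^ 2 / σt ^ 2 :=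
      div_le_div_of_nonneg_right hsq (by positivity)
    have hE2 : Real.exp (-‖tγ s - tη t‖ ^ 2 / σt ^ 2) ≤ E := by
      rw [hEdef]
      apply Real.exp_le_exp.2
      rw [neg_div, neg_div, neg_le_neg_iff]
      exact hdiv
    calc Real.exp (-‖γ s - η t‖ ^ 2 / x ^ 2) * Real.exp (-‖tγ s - tη t‖ ^ 2 / σt ^ 2)
        ≤ 1 * E := mul_le_mul (hexp_le_one _ _) hE2 (Real.exp_pos _).le zero_le_one
      _ = E := one_mul E
  -- STEP 2 : self-term lower bound for γ
  have self_lower : c₀ * x * (L₁ / 2) ≤ vfInner x σt L₁ L₁ γ tγ γ tγ := by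
    rw [vfInner]
    apply double_lower hL₁ hx hC1.le hc₀.le _ (fun s t => hf0 _ _ _ _)
    · -- hfc
      intro s hs t ht
      have hsIcc : s ∈ Icc (0:ℝ) L₁ := ⟨hs.1.le, by linarith [hs.2]⟩
      have htIcc : t ∈ Icc (0:ℝ) L₁ := ⟨le_trans hs.1.le ht.1, by linarith [ht.2, hs.2, hC1.le]⟩
      have habs : |s - t| ≤ x := by
        rw [abs_sub_le_iff]; constructor <;> linarith [ht.1, ht.2]
      have h1 : ‖γ s - γ t‖ ≤ x := le_trans (hγlip s hsIcc t htIcc) habs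
      have h2 : ‖tγ s - tγ t‖ ≤ M * x :=
        le_trans (hMlip s hsIcc t htIcc) (mul_le_mul_of_nonneg_left habs hM0)
      have e1 : Real.exp (-(1:ℝ)) ≤ Real.exp (-‖γ s - γ t‖ ^ 2 / x ^ 2) := by
        apply Real.exp_le_exp.2
        rw [neg_div, neg_le_neg_iff]
        rw [div_le_one (by positivity)]
        exact pow_le_pow_left₀ (norm_nonneg _) h1 2 |>.trans_eq rfl
      have e2 : Real.exp (-(M / k₁) ^ 2) ≤ Real.exp (-‖tγ s - tγ t‖ ^ 2 / σt ^ 2) := by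
        apply Real.exp_le_exp.2
        rw [neg_div, neg_le_neg_iff]
        have hb1 : ‖tγ s - tγ t‖ ^ 2 ≤ (M * x) ^ 2 := pow_le_pow_left₀ (norm_nonneg _) h2 2
        have hb2 : ‖tγ s - tγ t‖ ^ 2 / σt ^ 2 ≤ (M * x) ^ 2 / σt ^ 2 :=
          div_le_div_of_nonneg_right hb1 (by positivity)
        have hb3 : (M * x) ^ 2 / σt ^ 2 ≤ (M * x) ^ 2 / (k₁ * x) ^ 2 := by
          apply div_le_div_of_nonneg_left (by positivity) (by positivity)
          exact pow_le_pow_left₀ (by positivity) hσt1 2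
        have hb4 : (M * x) ^ 2 / (k₁ * x) ^ 2 = (M / k₁) ^ 2 := by
          field_simp
        linarith
      calc c₀ = Real.exp (-1) * Real.exp (-(M / k₁) ^ 2) := hc₀def
        _ ≤ _ := mul_le_mul e1 e2 (Real.exp_pos _).le (Real.exp_pos _).le
    · -- hint
      intro s hs
      exact ((inner_cont x σt L₁ (γ s) (tγ s) γ tγ hγcont htγcont).integrableOn_Icc).mono_set
        Ioc_subset_Icc_self
    · -- hF
      exact self_F_integrable x σt L₁ hL₁ γ tγ hγcont htγcont
  -- STEP 3 : η self-term is nonnegative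
  have self_η_nonneg : 0 ≤ vfInner x σt L₂ L₂ η tη η tη := by
    rw [vfInner]
    apply intervalIntegral.integral_nonneg hL₂.le
    intro s _
    exact intervalIntegral.integral_nonneg hL₂.le (fun t _ => hf0 _ _ _ _)
  -- STEP 4 : numeric bound : E * L₁ * L₂ + r * r ≤ ε * (c₀ * x * (L₁ / 2))
  have hr2 : r * r ≤ c₅ * x := by
    have : r * r = x ^ (2 * p - 1) * x := by
      rw [hrdef, ← Real.rpow_add hx]
      nth_rewrite 3 [← Real.rpow_one x]
      rw [← Real.rpow_add hx]
      congr 1; ring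
    rw [this]
    exact mul_le_mul_of_nonneg_right hC3.le hx.le
  have hEbound : E * L₁ * L₂ ≤ c₅ * x := by
    set z : ℝ := x ^ (-q) / k₂ ^ 2 with hzdef
    have hz : 0 < z := by
      apply div_pos (Real.rpow_pos_of_pos hx _) (by positivity)
    -- E ≤ exp (-z)
    have hra2 : (r ^ a) ^ 2 = x ^ (-q) * x ^ 2 := by
      rw [hrdef, ← Real.rpow_mul hx.le, ← Real.rpow_natCast (x ^ (p * a)) 2,
        ← Real.rpow_mul hx.le, ← Real.rpow_natCast x 2, ← Real.rpow_add hx]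
      congr 1
      push_cast
      rw [hpdef, hqdef]
      field_simp
      ring
    have hd1 : (r ^ a) ^ 2 / (k₂ * x) ^ 2 = z := by
      rw [hra2, hzdef, mul_pow]
      rw [← Real.rpow_natCast x 2]
      field_simp [ne_of_gt (Real.rpow_pos_of_pos hx (2:ℝ)), ne_of_gt hx]
    have hd2 : (r ^ a) ^ 2 / (k₂ * x) ^ 2 ≤ (r ^ a) ^ 2 / σt ^ 2 := by
      apply div_le_div_of_nonneg_left (by positivity) (by positivity)
      exact pow_le_pow_left₀ hσt.le hσt2 2
    have hEz : E ≤ Real.exp (-z) := by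
      rw [hEdef]
      apply Real.exp_le_exp.2
      rw [neg_div]
      have hzle : z ≤ (r ^ a) ^ 2 / σt ^ 2 := hd1 ▸ hd2
      linarith
    have hzm : Real.exp (-z) ≤ ((m : ℝ) * k₂ ^ 2) ^ m * x ^ (q * m) := by
      have h1 := exp_neg_le_pow m hm1 hz
      have h2 : (m : ℝ) / z = (m : ℝ) * k₂ ^ 2 * x ^ q := by
        rw [hzdef, Real.rpow_neg hx.le]
        field_simp
      have h3 : ((m : ℝ) / z) ^ m = ((m : ℝ) * k₂ ^ 2) ^ m * x ^ (q * m) := by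
        rw [h2, mul_pow, ← Real.rpow_natCast (x ^ q) m, ← Real.rpow_mul hx.le]
      linarith [h3 ▸ h1]
    have hxqm : x ^ (q * m) = x ^ (q * m - 1) * x := by
      nth_rewrite 3 [← Real.rpow_one x]
      rw [← Real.rpow_add hx]
      congr 1; ring
    have hfinal : E * L₁ * L₂ ≤ L₁ * L₂ * ((m : ℝ) * k₂ ^ 2) ^ m * x ^ (q * m - 1) * x := by
      calc E * L₁ * L₂ ≤ (((m : ℝ) * k₂ ^ 2) ^ m * x ^ (q * m)) * L₁ * L₂ := by
            apply mul_le_mul_of_nonneg_right _ hL₂.le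
            apply mul_le_mul_of_nonneg_right _ hL₁.le
            exact le_trans hEz hzm
        _ = L₁ * L₂ * ((m : ℝ) * k₂ ^ 2) ^ m * x ^ (q * m - 1) * x := by
            rw [hxqm]; ring
    have hlast : L₁ * L₂ * ((m : ℝ) * k₂ ^ 2) ^ m * x ^ (q * m - 1) ≤ c₅ := by
      have := mul_le_mul_of_nonneg_left hC4.le
        (show (0:ℝ) ≤ L₁ * L₂ * ((m : ℝ) * k₂ ^ 2) ^ m by positivity)
      rw [hc₄def] at this
      calc L₁ * L₂ * ((m : ℝ) * k₂ ^ 2) ^ m * x ^ (q * m - 1)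
          ≤ L₁ * L₂ * ((m : ℝ) * k₂ ^ 2) ^ m * (c₅ / (L₁ * L₂ * ((m : ℝ) * k₂ ^ 2) ^ m)) := this
        _ = c₅ := by field_simp
    calc E * L₁ * L₂ ≤ L₁ * L₂ * ((m : ℝ) * k₂ ^ 2) ^ m * x ^ (q * m - 1) * x := hfinal
      _ ≤ c₅ * x := mul_le_mul_of_nonneg_right hlast hx.le
  -- conclusion
  have hsum : E * L₁ * L₂ + r * r ≤ ε * (c₀ * x * (L₁ / 2)) := by
    have : ε * (c₀ * x * (L₁ / 2)) = 2 * (c₅ * x) := by rw [hc₅def]; ring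
    rw [this]
    linarith
  calc vfInner x σt L₁ L₂ γ tγ η tη ≤ E * L₁ * L₂ + r * r := cross_bound
    _ ≤ ε * (c₀ * x * (L₁ / 2)) := hsum
    _ ≤ ε * vfInner x σt L₁ L₁ γ tγ γ tγ := mul_le_mul_of_nonneg_left self_lower hε.le
    _ ≤ ε * (vfInner x σt L₁ L₁ γ tγ γ tγ + vfInner x σt L₂ L₂ η tη η tη) := by
        apply mul_le_mul_of_nonneg_left _ hε.le
        linarith

end Main

set_option maxHeartbeats 400000 in
/-- Lemma 2 of the paper: for two edges `γ`, `η` (unit-speed C² curves) branching from a common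
point `γ 0 = η 0` with common initial tangent `tγ 0 = tη 0`, satisfying the tangent-distance
monotonicity Assumption 2 and the deviation-rate Assumption 3, the cross term `⟨μ_γ, μ_η⟩` is
`o(‖μ_γ‖² + ‖μ_η‖²)` as `σx, σt → 0` with `σx ≍ σt`. -/
theorem cross_term_negligible_branching_edges
    {n : ℕ} (hn : 1 ≤ n) (L₁ L₂ : ℝ) (hL₁ : 0 < L₁) (hL₂ : 0 < L₂)
    (γ tγ η tη : ℝ → EuclideanSpace ℝ (Fin n))
    -- unit-speed C¹ structure
    (hγderiv : ∀ s ∈ Icc (0:ℝ) L₁, HasDerivWithinAt γ (tγ s) (Icc 0 L₁) s)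
    (hηderiv : ∀ t ∈ Icc (0:ℝ) L₂, HasDerivWithinAt η (tη t) (Icc 0 L₂) t)
    (hγunit : ∀ s ∈ Icc (0:ℝ) L₁, ‖tγ s‖ = 1)
    (hηunit : ∀ t ∈ Icc (0:ℝ) L₂, ‖tη t‖ = 1)
    -- C² regularity
    (hγC2 : ContDiffOn ℝ 2 γ (Icc 0 L₁))
    (hηC2 : ContDiffOn ℝ 2 η (Icc 0 L₂))
    -- common branching point and common initial tangent
    (hjoin : γ 0 = η 0)
    (htangent : tγ 0 = tη 0)
    -- Assumption 2: tangent distance monotone in total arc length from the branching point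
    (hA2 : ∀ s ∈ Icc (0:ℝ) L₁, ∀ s' ∈ Icc (0:ℝ) L₁, ∀ t ∈ Icc (0:ℝ) L₂, ∀ t' ∈ Icc (0:ℝ) L₂,
      s + t ≤ s' + t' → ‖tγ s - tη t‖ ≤ ‖tγ s' - tη t'‖)
    -- Assumption 3: the branches deviate from the initial direction at rate at least `s ^ a`
    (hA3 : ∃ ε₀ : ℝ, 0 < ε₀ ∧ ∃ a : ℝ, a ∈ Ioo (0:ℝ) 2 ∧
      (∀ s ∈ Ioc (0:ℝ) (min ε₀ L₁), s ^ a ≤ ‖tγ s - tγ 0‖) ∧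
      (∀ t ∈ Ioc (0:ℝ) (min ε₀ L₂), t ^ a ≤ ‖tη t - tη 0‖)) :
    ∀ k₁ k₂ : ℝ, 0 < k₁ → 0 < k₂ → ∀ ε : ℝ, 0 < ε →
      ∃ δ > 0, ∀ σx : ℝ, 0 < σx → σx < δ → ∀ σt : ℝ, k₁ * σx ≤ σt → σt ≤ k₂ * σx →
        vfInner σx σt L₁ L₂ γ tγ η tη ≤
          ε * (vfInner σx σt L₁ L₁ γ tγ γ tγ + vfInner σx σt L₂ L₂ η tη η tη) := by
  exact cross_term_negligible_branching_edges' hn L₁ L₂ hL₁ hL₂ γ tγ η tη hγderiv hηderiv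
    hγunit hηunit hγC2 hηC2 hjoin htangent hA2 hA3
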